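/- Purely combinatorial consequence: for q = p^r, n = m·p^s with p ∤ m, 0 < s < r and n ≥ 5, the identity Σ_{i=1}^{q-1} [ni/q]_S = ((q-1)(n-1) + 1 - p^s)/2 holds, where [z]_S denotes the greatest integer strictly less than z. -/

import Mathlib

/-- The greatest integer strictly less than `a / b` (for naturals `a, b`):
`⌊a/b⌋` if `b ∤ a`, and `a/b - 1` if `b ∣ a`. -/
def strictFloorDiv (a b : ℕ) : ℕ := if b ∣ a then a / b - 1 else a / b

private lemma pair_aux (n q i : ℕ) (hq : 0 < q) (hn : 0 < n) (hi1 : 1 ≤ i) (hi2 : i ≤ q - 1) :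
    (strictFloorDiv (n * i) q : ℤ) + (strictFloorDiv (n * (q - i)) q : ℤ)
      = (n : ℤ) - 1 - (if q ∣ n * i then 1 else 0) := by
  have hiq : i < q := by omega
  have hab : n * i + n * (q - i) = n * q := by
    rw [← Nat.mul_add]; congr 1; omega
  have ha : 0 < n * i := Nat.mul_pos hn hi1
  have hb : 0 < n * (q - i) := Nat.mul_pos hn (by omega)
  have eqa := Nat.div_add_mod (n * i) q
  have eqb := Nat.div_add_mod (n * (q - i)) q
  have hra : n * i % q < q := Nat.mod_lt _ hq
  have hrb : n * (q - i) % q < q := Nat.mod_lt _ hq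
  have hndiv : (n * i + n * (q - i)) / q = n := by
    rw [hab]; exact Nat.mul_div_cancel _ hq
  have hadd := Nat.add_div (a := n * i) (b := n * (q - i)) hq
  rw [hndiv] at hadd
  have hmod0 : (n * i % q + n * (q - i) % q) % q = 0 := by
    rw [← Nat.add_mod, hab, Nat.mul_mod_left]
  by_cases hdvd : q ∣ n * i
  · have hra0 : n * i % q = 0 := Nat.mod_eq_zero_of_dvd hdvd
    have hrb0 : n * (q - i) % q = 0 := by
      rw [hra0, zero_add, Nat.mod_eq_of_lt hrb] at hmod0; exact hmod0
    have hdvdb : q ∣ n * (q - i) := Nat.dvd_of_mod_eq_zero hrb0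
    rw [hra0, hrb0, if_neg (by omega), Nat.add_zero] at hadd
    have hda1 : 1 ≤ n * i / q := by
      rcases Nat.eq_zero_or_pos (n * i / q) with h | h
      · rw [h, Nat.mul_zero, Nat.zero_add, hra0] at eqa; omega
      · exact h
    have hdb1 : 1 ≤ n * (q - i) / q := by
      rcases Nat.eq_zero_or_pos (n * (q - i) / q) with h | h
      · rw [h, Nat.mul_zero, Nat.zero_add, hrb0] at eqb; omega
      · exact h
    simp only [strictFloorDiv, if_pos hdvd, if_pos hdvdb]
    have hadd' : (n : ℤ) = (↑(n * i / q) : ℤ) + ↑(n * (q - i) / q) := by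
      exact_mod_cast hadd
    rw [Nat.cast_sub hda1, Nat.cast_sub hdb1, hadd']
    ring
  · have hra0 : n * i % q ≠ 0 := fun h => hdvd (Nat.dvd_of_mod_eq_zero h)
    have hrb0 : n * (q - i) % q ≠ 0 := by
      intro h
      have hdb : q ∣ n * (q - i) := Nat.dvd_of_mod_eq_zero h
      have heq : n * i = n * q - n * (q - i) := by omega
      exact hdvd (heq ▸ Nat.dvd_sub (dvd_mul_left q n) hdb)
    obtain ⟨k, hk⟩ : q ∣ n * i % q + n * (q - i) % q := Nat.dvd_of_mod_eq_zero hmod0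
    have h0 : k ≠ 0 := by rintro rfl; rw [Nat.mul_zero] at hk; omega
    have h2 : k < 2 := by
      by_contra h
      have := Nat.mul_le_mul_left q (show 2 ≤ k by omega)
      omega
    have hk1 : k = 1 := by omega
    subst hk1
    rw [Nat.mul_one] at hk
    rw [if_pos (by omega)] at hadd
    simp only [strictFloorDiv, if_neg hdvd, if_neg (fun h => hrb0 (Nat.mod_eq_zero_of_dvd h))]
    have hadd' : (n : ℤ) = (↑(n * i / q) : ℤ) + ↑(n * (q - i) / q) + 1 := by
      exact_mod_cast hadd
    rw [hadd']
    ring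

/-- For `q = p^r`, `n = m·p^s ≥ 5` with `p ∤ m` and `0 < s < r`:
`Σ_{i=1}^{q-1} [ni/q]_S = ((q-1)(n-1) + 1 - p^s)/2`, where `[z]_S` is the
greatest integer strictly less than `z`. -/
theorem stmt_15 (p r s m n : ℕ) (hp : p.Prime) (hs : 0 < s) (hsr : s < r)
    (hm : 0 < m) (hpm : ¬ p ∣ m) (hn : n = m * p ^ s) (hn5 : 5 ≤ n) :
    (∑ i ∈ Finset.Icc 1 (p ^ r - 1), (strictFloorDiv (n * i) (p ^ r) : ℤ)) =
      (((p : ℤ) ^ r - 1) * ((n : ℤ) - 1) + 1 - (p : ℤ) ^ s) / 2 := by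
  have hp2 : 2 ≤ p := hp.two_le
  set q := p ^ r with hqdef
  have hq : 0 < q := Nat.pow_pos (by omega)
  have hq2 : 2 ≤ q := by
    calc 2 ≤ p := hp2
    _ = p ^ 1 := (pow_one p).symm
    _ ≤ p ^ r := Nat.pow_le_pow_right (by omega) (by omega)
  have hn0 : 0 < n := by omega
  set S := ∑ i ∈ Finset.Icc 1 (q - 1), (strictFloorDiv (n * i) q : ℤ) with hS
  -- reflection: summing over q - i gives the same sum
  have hrefl : ∑ i ∈ Finset.Icc 1 (q - 1), (strictFloorDiv (n * (q - i)) q : ℤ) = S := by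
    rw [hS]
    refine Finset.sum_nbij' (fun i => q - i) (fun i => q - i) ?_ ?_ ?_ ?_ ?_
    · intro a hamem; simp only [Finset.mem_Icc] at *; omega
    · intro a hamem; simp only [Finset.mem_Icc] at *; omega
    · intro a hamem; simp only [Finset.mem_Icc] at *; omega
    · intro a hamem; simp only [Finset.mem_Icc] at *; omega
    · intro a hamem; rfl
  -- divisibility condition
  have hcond : ∀ i : ℕ, (q ∣ n * i ↔ p ^ (r - s) ∣ i) := by
    intro i
    have h1 : q = p ^ s * p ^ (r - s) := by rw [hqdef, ← pow_add]; congr 1; omega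
    have hps : (p : ℕ) ^ s ≠ 0 := by positivity
    rw [h1, hn, mul_comm m (p ^ s), mul_assoc, mul_dvd_mul_iff_left hps]
    have hcop : Nat.Coprime (p ^ (r - s)) m :=
      Nat.Coprime.pow_left _ ((Nat.Prime.coprime_iff_not_dvd hp).mpr hpm)
    exact ⟨fun h => hcop.dvd_of_dvd_mul_left h, fun h => h.mul_left m⟩
  -- counting divisible indices
  have hcount : (∑ i ∈ Finset.Icc 1 (q - 1), (if q ∣ n * i then (1 : ℤ) else 0))
      = (p : ℤ) ^ s - 1 := by
    have : ∀ i ∈ Finset.Icc 1 (q - 1), (if q ∣ n * i then (1 : ℤ) else 0)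
        = (if p ^ (r - s) ∣ i then (1 : ℤ) else 0) := by
      intro i _
      simp only [hcond i]
    rw [Finset.sum_congr rfl this, Finset.sum_boole]
    have hIcc : Finset.Icc 1 (q - 1) = Finset.Ioc 0 (q - 1) := Finset.Icc_add_one_left_eq_Ioc 0 (q - 1)
    rw [hIcc, Nat.Ioc_filter_dvd_card_eq_div]
    -- (q - 1) / p^(r-s) = p^s - 1
    have ht : 0 < p ^ (r - s) := by positivity
    have hps1 : 1 ≤ p ^ s := Nat.one_le_pow _ _ (by omega)
    have hqeq : q = p ^ (r - s) * p ^ s := by rw [hqdef, ← pow_add]; congr 1; omega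
    have hdiveq : (q - 1) / p ^ (r - s) = p ^ s - 1 := by
      have hexp : q - 1 = p ^ (r - s) - 1 + p ^ (r - s) * (p ^ s - 1) := by
        rw [hqeq, Nat.mul_sub, Nat.mul_one]
        have h1 : p ^ (r - s) ≤ p ^ (r - s) * p ^ s := Nat.le_mul_of_pos_right _ hps1
        omega
      rw [hexp, Nat.add_mul_div_left _ _ ht, Nat.div_eq_of_lt (by omega), Nat.zero_add]
    rw [hdiveq]
    have : ((p ^ s - 1 : ℕ) : ℤ) = (p : ℤ) ^ s - 1 := by
      push_cast [hps1]
      ring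
    exact this
  -- the doubled sum
  have h2 : 2 * S = ((p : ℤ) ^ r - 1) * ((n : ℤ) - 1) + 1 - (p : ℤ) ^ s := by
    have hsplit : 2 * S = S + S := by ring
    rw [hsplit]
    nth_rewrite 2 [← hrefl]
    rw [hS, ← Finset.sum_add_distrib]
    have hcongr : ∑ i ∈ Finset.Icc 1 (q - 1),
        ((strictFloorDiv (n * i) q : ℤ) + (strictFloorDiv (n * (q - i)) q : ℤ))
        = ∑ i ∈ Finset.Icc 1 (q - 1),
          ((n : ℤ) - 1 - (if q ∣ n * i then 1 else 0)) := by
      refine Finset.sum_congr rfl ?_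
      intro i hi
      simp only [Finset.mem_Icc] at hi
      exact pair_aux n q i hq hn0 hi.1 hi.2
    rw [hcongr, Finset.sum_sub_distrib, hcount, Finset.sum_const, Nat.card_Icc]
    have hcard : ((q - 1 + 1 - 1 : ℕ) : ℤ) = (p : ℤ) ^ r - 1 := by
      have : q - 1 + 1 - 1 = q - 1 := by omega
      rw [this, hqdef]
      push_cast [show 1 ≤ p ^ r from hq]
      ring
    rw [nsmul_eq_mul, hcard]
    ring
  rw [hS] at h2 ⊢
  rw [← h2, Int.mul_ediv_cancel_left _ (by norm_num)]
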